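/- Let f(x,y,z) = [(yz+1)² + y²][(xz² - 1)²(xz² + 1)² + y² + z² + 1]. Then f ≥ 1/2 on ℝ³, and for every N ∈ ℝ there exists ξ ∈ ℝ³ such that Φ_{N,ξ}(x,y,z) = e^{e^{N(|（x,y,z)-ξ|²)}} f(x,y,z) is not convex on ℝ³; specifically, for ξ = (0, t⁻¹, -t) with t sufficiently large, ∂²Φ_{N,ξ}/∂x²(ξ) = e(2N f(ξ) + ∂²f/∂x²(ξ)) < 0, since f(ξ) = 2t⁻² + t⁻⁴ + 1 and ∂²f/∂x²(ξ) = -4t². -/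

import Mathlib

open Real Set

/-- `f(x,y,z) = [(yz+1)² + y²][(xz²-1)²(xz²+1)² + y² + z² + 1]`. -/
noncomputable def f16 (p : ℝ × ℝ × ℝ) : ℝ :=
  ((p.2.1 * p.2.2 + 1) ^ 2 + p.2.1 ^ 2) *
    ((p.1 * p.2.2 ^ 2 - 1) ^ 2 * (p.1 * p.2.2 ^ 2 + 1) ^ 2 + p.2.1 ^ 2 + p.2.2 ^ 2 + 1)

/-- `Φ_{N,ξ}(p) = e^{e^{N|p-ξ|²}} f(p)` with the Euclidean squared distance. -/
noncomputable def Phi16 (N : ℝ) (ξ p : ℝ × ℝ × ℝ) : ℝ :=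
  Real.exp (Real.exp (N *
    ((p.1 - ξ.1) ^ 2 + (p.2.1 - ξ.2.1) ^ 2 + (p.2.2 - ξ.2.2) ^ 2))) * f16 p

/-- `f ≥ 1/2` on `ℝ³`; for `t > 0` and `ξ = (0, t⁻¹, -t)` one has
`f(ξ) = 2t⁻² + t⁻⁴ + 1`, `∂²f/∂x²(ξ) = -4t²` and
`∂²Φ_{N,ξ}/∂x²(ξ) = e(2N f(ξ) + ∂²f/∂x²(ξ))`; for every `N` and all `t` large enough
this second derivative is negative, and `Φ_{N,ξ}` is not convex on `ℝ³`. -/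
-- helper: polynomial derivative
lemma poly_hasD (p q r x : ℝ) :
    HasDerivAt (fun x : ℝ => p*x^4 + q*x^2 + r) (4*p*x^3 + 2*q*x) x := by
  have h := (((hasDerivAt_pow 4 x).const_mul p).add ((hasDerivAt_pow 2 x).const_mul q)).add_const r
  exact h.congr_deriv (by ring)

lemma poly_deriv (p q r : ℝ) :
    deriv (fun x : ℝ => p*x^4 + q*x^2 + r) = fun x => 4*p*x^3 + 2*q*x := by
  funext x; exact (poly_hasD p q r x).deriv

lemma poly_deriv2 (p q r : ℝ) :
    deriv (deriv (fun x : ℝ => p*x^4 + q*x^2 + r)) 0 = 2*q := by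
  rw [poly_deriv]
  have h : HasDerivAt (fun x : ℝ => 4*p*x^3 + 2*q*x) (4*p*(3*0^2) + 2*q) 0 := by
    have := ((hasDerivAt_pow 3 (0:ℝ)).const_mul (4*p)).add ((hasDerivAt_id (0:ℝ)).const_mul (2*q))
    exact this.congr_deriv (by ring)
  rw [h.deriv]; ring

lemma exp_exp_hasD (N x : ℝ) :
    HasDerivAt (fun x : ℝ => Real.exp (Real.exp (N*x^2)))
      (Real.exp (Real.exp (N*x^2)) * (Real.exp (N*x^2) * (2*N*x))) x := by
  have h1 : HasDerivAt (fun x : ℝ => N*x^2) (2*N*x) x := by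
    have := (hasDerivAt_pow 2 x).const_mul N
    exact this.congr_deriv (by ring)
  exact h1.exp.exp

lemma phi_hasD (N p q r x : ℝ) :
    HasDerivAt (fun x : ℝ => Real.exp (Real.exp (N*x^2)) * (p*x^4 + q*x^2 + r))
      (Real.exp (Real.exp (N*x^2)) * (Real.exp (N*x^2) * (2*N*x) * (p*x^4 + q*x^2 + r)
        + (4*p*x^3 + 2*q*x))) x := by
  have := (exp_exp_hasD N x).mul (poly_hasD p q r x)
  exact this.congr_deriv (by ring)

lemma phiD_hasD (N p q r : ℝ) :
    HasDerivAt (fun x : ℝ => Real.exp (Real.exp (N*x^2)) * (Real.exp (N*x^2) * (2*N*x) * (p*x^4 + q*x^2 + r)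
        + (4*p*x^3 + 2*q*x))) (Real.exp 1 * (2*N*r + 2*q)) 0 := by
  have h1 : HasDerivAt (fun x : ℝ => N*x^2) (2*N*(0:ℝ)) 0 := by
    have := (hasDerivAt_pow 2 (0:ℝ)).const_mul N
    exact this.congr_deriv (by ring)
  have hlin : HasDerivAt (fun x : ℝ => 2*N*x) (2*N) (0:ℝ) := by
    simpa using (hasDerivAt_id (0:ℝ)).const_mul (2*N)
  have hcub : HasDerivAt (fun x : ℝ => 4*p*x^3 + 2*q*x) (4*p*(3*(0:ℝ)^2) + 2*q) 0 := by
    have := ((hasDerivAt_pow 3 (0:ℝ)).const_mul (4*p)).add ((hasDerivAt_id (0:ℝ)).const_mul (2*q))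
    exact this.congr_deriv (by ring)
  have hG := ((h1.exp.mul hlin).mul (poly_hasD p q r 0)).add hcub
  have hD := (exp_exp_hasD N 0).mul hG
  exact hD.congr_deriv (by norm_num)

lemma phi_deriv2 (N p q r : ℝ) :
    deriv (deriv (fun x : ℝ => Real.exp (Real.exp (N*x^2)) * (p*x^4 + q*x^2 + r))) 0
      = Real.exp 1 * (2*N*r + 2*q) := by
  have h : deriv (fun x : ℝ => Real.exp (Real.exp (N*x^2)) * (p*x^4 + q*x^2 + r))
      = fun x => Real.exp (Real.exp (N*x^2)) * (Real.exp (N*x^2) * (2*N*x) * (p*x^4 + q*x^2 + r)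
        + (4*p*x^3 + 2*q*x)) := by
    funext x; exact (phi_hasD N p q r x).deriv
  rw [h, (phiD_hasD N p q r).deriv]

lemma monotone_deriv_nonneg {D : ℝ → ℝ} (hm : Monotone D) {c x : ℝ}
    (h : HasDerivAt D c x) : 0 ≤ c := by
  have ht := hasDerivAt_iff_tendsto_slope.1 h
  refine ge_of_tendsto ht ?_
  filter_upwards [self_mem_nhdsWithin] with y hy
  have hyx : y ≠ x := hy
  rcases lt_or_gt_of_ne hyx with hlt | hgt
  · have : D y - D x ≤ 0 := sub_nonpos.2 (hm hlt.le)
    have hd : y - x < 0 := sub_neg.2 hlt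
    rw [slope_def_field]
    exact div_nonneg_iff.2 (Or.inr ⟨this, hd.le⟩)
  · have : 0 ≤ D y - D x := sub_nonneg.2 (hm hgt.le)
    have hd : 0 < y - x := sub_pos.2 hgt
    rw [slope_def_field]
    exact div_nonneg this hd.le

noncomputable def lineMap16 (c2 c3 : ℝ) : ℝ →ᵃ[ℝ] ℝ × ℝ × ℝ where
  toFun := fun x => (x, c2, c3)
  linear := LinearMap.prod LinearMap.id 0
  map_vadd' := by intro p v; simp [Prod.ext_iff]

lemma f16_line (t : ℝ) (ht : t ≠ 0) :
    (fun x : ℝ => f16 (x, t⁻¹, -t)) =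
    fun x : ℝ => t^6*x^4 + (-2*t^2)*x^2 + (2*t⁻¹^2 + t⁻¹^4 + 1) := by
  funext x
  show ((t⁻¹ * (-t) + 1) ^ 2 + t⁻¹ ^ 2) *
    ((x * (-t) ^ 2 - 1) ^ 2 * (x * (-t) ^ 2 + 1) ^ 2 + t⁻¹ ^ 2 + (-t) ^ 2 + 1) = _
  field_simp
  ring

lemma phi_line (N t : ℝ) (ht : t ≠ 0) :
    (fun x : ℝ => Phi16 N (0, t⁻¹, -t) (x, t⁻¹, -t)) =
    fun x : ℝ => Real.exp (Real.exp (N * x^2)) *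
      (t^6*x^4 + (-2*t^2)*x^2 + (2*t⁻¹^2 + t⁻¹^4 + 1)) := by
  funext x
  show Real.exp (Real.exp (N * ((x - 0)^2 + (t⁻¹ - t⁻¹)^2 + (-t - -t)^2))) * f16 (x, t⁻¹, -t) = _
  have h1 : N * ((x - 0)^2 + (t⁻¹ - t⁻¹)^2 + (-t - -t)^2) = N * x^2 := by ring
  rw [h1, congrFun (f16_line t ht) x]

theorem stmt16 :
    (∀ p : ℝ × ℝ × ℝ, (1 : ℝ) / 2 ≤ f16 p) ∧
    (∀ t : ℝ, 0 < t →
      f16 (0, t⁻¹, -t) = 2 * t⁻¹ ^ 2 + t⁻¹ ^ 4 + 1 ∧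
      deriv (deriv (fun x : ℝ => f16 (x, t⁻¹, -t))) 0 = -4 * t ^ 2) ∧
    (∀ N : ℝ, ∀ t : ℝ, 0 < t →
      deriv (deriv (fun x : ℝ => Phi16 N (0, t⁻¹, -t) (x, t⁻¹, -t))) 0 =
        Real.exp 1 * (2 * N * f16 (0, t⁻¹, -t) +
          deriv (deriv (fun x : ℝ => f16 (x, t⁻¹, -t))) 0)) ∧
    ∀ N : ℝ, ∃ T : ℝ, ∀ t : ℝ, T ≤ t →
      deriv (deriv (fun x : ℝ => Phi16 N (0, t⁻¹, -t) (x, t⁻¹, -t))) 0 < 0 ∧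
      ¬ ConvexOn ℝ Set.univ (Phi16 N (0, t⁻¹, -t)) := by
  refine ⟨?_, ?_, ?_, ?_⟩
  · rintro ⟨x, y, z⟩
    show (1:ℝ)/2 ≤ ((y*z+1)^2+y^2) * ((x*z^2-1)^2*(x*z^2+1)^2 + y^2 + z^2 + 1)
    nlinarith [sq_nonneg (y*(z^2+1)+z),
      mul_nonneg (by positivity : (0:ℝ) ≤ (y*z+1)^2+y^2)
        (by positivity : (0:ℝ) ≤ (x*z^2-1)^2*(x*z^2+1)^2),
      mul_nonneg (by positivity : (0:ℝ) ≤ (y*z+1)^2+y^2) (sq_nonneg y)]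
  · intro t ht
    have ht' := ht.ne'
    refine ⟨by simpa using congrFun (f16_line t ht') 0, ?_⟩
    rw [f16_line t ht', poly_deriv2]; ring
  · intro N t ht
    have ht' := ht.ne'
    have hf : f16 (0, t⁻¹, -t) = 2*t⁻¹^2 + t⁻¹^4 + 1 := by
      simpa using congrFun (f16_line t ht') 0
    rw [phi_line N t ht', phi_deriv2, f16_line t ht', poly_deriv2, hf]
  · intro N
    refine ⟨|N| + 2, fun t htT => ?_⟩
    have ht0 : (0:ℝ) < t := lt_of_lt_of_le (by positivity) htT
    have ht' := ht0.ne'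
    have hval : deriv (deriv (fun x : ℝ => Phi16 N (0,t⁻¹,-t) (x,t⁻¹,-t))) 0
        = Real.exp 1 * (2*N*(2*t⁻¹^2+t⁻¹^4+1) + 2*(-2*t^2)) := by
      rw [phi_line N t ht', phi_deriv2]
    have h2 : (2:ℝ) ≤ t := le_trans (by linarith [abs_nonneg N]) htT
    have hu : t⁻¹ ≤ 2⁻¹ := by
      exact inv_anti₀ (by norm_num) h2
    have hu0 : (0:ℝ) ≤ t⁻¹ := by positivity
    have hN2 : |N| ≤ t - 2 := by linarith
    have hr2 : 2*t⁻¹^2 + t⁻¹^4 + 1 ≤ 2 := by nlinarith [pow_le_pow_left₀ hu0 hu 2, pow_le_pow_left₀ hu0 hu 4]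
    have hr1 : (1:ℝ) ≤ 2*t⁻¹^2 + t⁻¹^4 + 1 := by nlinarith [pow_nonneg hu0 2, pow_nonneg hu0 4]
    have key : 2*N*(2*t⁻¹^2+t⁻¹^4+1) + 2*(-2*t^2) < 0 := by
      rcases le_or_gt N 0 with hN0 | hN0
      · nlinarith [mul_nonneg (by linarith : (0:ℝ) ≤ -N) (by linarith : (0:ℝ) ≤ 2*t⁻¹^2+t⁻¹^4+1)]
      · have hN : N ≤ |N| := le_abs_self N
        nlinarith [mul_le_mul_of_nonneg_left hr2 (by linarith : (0:ℝ) ≤ 2*N), sq_nonneg (t-1)]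
    have hneg : Real.exp 1 * (2*N*(2*t⁻¹^2+t⁻¹^4+1) + 2*(-2*t^2)) < 0 :=
      mul_neg_of_pos_of_neg (Real.exp_pos 1) key
    refine ⟨hval ▸ hneg, ?_⟩
    intro hc
    have hA := hc.comp_affineMap (lineMap16 t⁻¹ (-t))
    rw [Set.preimage_univ] at hA
    have hgeq : (Phi16 N (0,t⁻¹,-t)) ∘ (lineMap16 t⁻¹ (-t)) = fun x : ℝ =>
        Real.exp (Real.exp (N*x^2)) * (t^6*x^4 + (-2*t^2)*x^2 + (2*t⁻¹^2+t⁻¹^4+1)) := by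
      rw [← phi_line N t ht']; rfl
    rw [hgeq] at hA
    have hdiff : ∀ x ∈ (Set.univ : Set ℝ), DifferentiableAt ℝ (fun x : ℝ =>
        Real.exp (Real.exp (N*x^2)) * (t^6*x^4 + (-2*t^2)*x^2 + (2*t⁻¹^2+t⁻¹^4+1))) x :=
      fun x _ => (phi_hasD N (t^6) (-2*t^2) (2*t⁻¹^2+t⁻¹^4+1) x).differentiableAt
    have hmono : Monotone (deriv (fun x : ℝ =>
        Real.exp (Real.exp (N*x^2)) * (t^6*x^4 + (-2*t^2)*x^2 + (2*t⁻¹^2+t⁻¹^4+1)))) :=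
      monotoneOn_univ.1 (hA.monotoneOn_deriv hdiff)
    have hderivF : deriv (fun x : ℝ =>
        Real.exp (Real.exp (N*x^2)) * (t^6*x^4 + (-2*t^2)*x^2 + (2*t⁻¹^2+t⁻¹^4+1)))
        = fun x => Real.exp (Real.exp (N*x^2)) * (Real.exp (N*x^2) * (2*N*x) *
            (t^6*x^4 + (-2*t^2)*x^2 + (2*t⁻¹^2+t⁻¹^4+1))
          + (4*(t^6)*x^3 + 2*(-2*t^2)*x)) := by
      funext x; exact (phi_hasD N (t^6) (-2*t^2) (2*t⁻¹^2+t⁻¹^4+1) x).deriv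
    rw [hderivF] at hmono
    have h0 := monotone_deriv_nonneg hmono (phiD_hasD N (t^6) (-2*t^2) (2*t⁻¹^2+t⁻¹^4+1))
    have : Real.exp 1 * (2*N*(2*t⁻¹^2+t⁻¹^4+1) + 2*(-2*t^2)) = Real.exp 1 * (2*N*(2*t⁻¹^2+t⁻¹^4+1) + 2*(-2*t^2)) := rfl
    linarith [hneg, h0]
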